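/- Let z be an ℝʳ-valued random vector with mean μ₀ and covariance Σ₀ (symmetric positive definite). Define l(μ, Σ) = ln det Σ + E[(z − μ)ᵀ Σ⁻¹ (z − μ)] over μ ∈ ℝʳ and Σ symmetric positive definite. Then l(μ, Σ) ≥ l(μ₀, Σ₀) = ln det Σ₀ + r, with equality iff μ = μ₀ and Σ = Σ₀. -/

import Mathlib

open Matrix

lemma auxTrace {r : ℕ} {A : Matrix (Fin r) (Fin r) ℝ} (hA : A.IsHermitian) :
    A.trace = ∑ i, hA.eigenvalues i := by
  conv_lhs => rw [hA.spectral_theorem]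
  rw [Unitary.conjStarAlgAut_apply]
  rw [Matrix.trace_mul_cycle]
  rw [show (star hA.eigenvectorUnitary.1 : Matrix _ _ ℝ) * hA.eigenvectorUnitary.1 = 1 from
    Matrix.mem_unitaryGroup_iff'.mp hA.eigenvectorUnitary.2]
  rw [one_mul, Matrix.trace_diagonal]
  simp

lemma auxKey {r : ℕ} {A : Matrix (Fin r) (Fin r) ℝ} (hA : A.PosDef) :
    (r : ℝ) + Real.log A.det ≤ A.trace ∧ ((r : ℝ) + Real.log A.det = A.trace ↔ A = 1) := by
  have hH := hA.1
  have hpos := hA.eigenvalues_pos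
  have htr : A.trace = ∑ i, hH.eigenvalues i := auxTrace hH
  have hdet : A.det = ∏ i, hH.eigenvalues i := by
    simpa using hH.det_eq_prod_eigenvalues
  have hlog : Real.log A.det = ∑ i, Real.log (hH.eigenvalues i) := by
    rw [hdet, Real.log_prod fun i _ => (hpos i).ne']
  have hterm : ∀ i, Real.log (hH.eigenvalues i) + 1 ≤ hH.eigenvalues i := fun i => by
    have := Real.log_le_sub_one_of_pos (hpos i); linarith
  have hsum : (r : ℝ) + Real.log A.det = ∑ i, (Real.log (hH.eigenvalues i) + 1) := by
    rw [hlog, Finset.sum_add_distrib]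
    simp [add_comm]
  refine ⟨?_, ?_, ?_⟩
  · rw [hsum, htr]
    exact Finset.sum_le_sum fun i _ => hterm i
  · intro heq
    have h0 : ∑ i, (hH.eigenvalues i - (Real.log (hH.eigenvalues i) + 1)) = 0 := by
      rw [Finset.sum_sub_distrib, ← hsum, ← htr, heq, sub_self]
    have hall := (Finset.sum_eq_zero_iff_of_nonneg
      (fun i _ => sub_nonneg.2 (hterm i))).1 h0
    have hone : ∀ i, hH.eigenvalues i = 1 := by
      intro i
      by_contra hne
      have h1 := Real.log_lt_sub_one_of_pos (hpos i) hne
      have h2 := hall i (Finset.mem_univ i)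
      linarith
    have hD : Matrix.diagonal (RCLike.ofReal ∘ hH.eigenvalues) = (1 : Matrix (Fin r) (Fin r) ℝ) := by
      ext i j
      by_cases h : i = j <;> simp [Matrix.diagonal_apply, Matrix.one_apply, hone, h]
    conv_lhs => rw [hH.spectral_theorem]
    rw [hD, Unitary.conjStarAlgAut_apply, mul_one]
    exact Matrix.mem_unitaryGroup_iff.mp hH.eigenvectorUnitary.2
  · rintro rfl
    simp [Matrix.trace_one]

lemma auxConj {r : ℕ} {A B : Matrix (Fin r) (Fin r) ℝ}
    (hA : A.PosDef) (hB : IsUnit B.det) : (Bᴴ * A * B).PosDef := by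
  refine Matrix.PosDef.of_dotProduct_mulVec_pos (Matrix.isHermitian_conjTranspose_mul_mul B hA.1) fun x hx => ?_
  have hBx : B *ᵥ x ≠ 0 := by
    intro h
    exact hx ((Matrix.mulVec_injective_iff_isUnit.mpr
      ((Matrix.isUnit_iff_isUnit_det B).mpr hB)).eq_iff.mp (by simpa using h))
  simpa only [star_mulVec, Matrix.dotProduct_mulVec, Matrix.vecMul_vecMul] using hA.dotProduct_mulVec_pos hBx

lemma auxMat {r : ℕ} {S0 S : Matrix (Fin r) (Fin r) ℝ} (hS0 : S0.PosDef) (hS : S.PosDef) :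
    Real.log S0.det + r ≤ Real.log S.det + (S⁻¹ * S0).trace ∧
    (Real.log S.det + (S⁻¹ * S0).trace = Real.log S0.det + r ↔ S = S0) := by
  obtain ⟨Q, hQh, hQ2⟩ : ∃ Q : Matrix (Fin r) (Fin r) ℝ, Qᴴ = Q ∧ Q * Q = S0 :=
    open scoped MatrixOrder in
    ⟨CFC.sqrt S0, (CFC.sqrt_nonneg S0).isSelfAdjoint, CFC.sqrt_mul_sqrt_self S0 hS0.posSemidef.nonneg⟩
  have hQdet : IsUnit Q.det := by
    have h2 : Q.det * Q.det = S0.det := by rw [← Matrix.det_mul, hQ2]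
    rcases eq_or_ne Q.det 0 with h | h
    · exact absurd (by rw [← h2, h, mul_zero]) hS0.det_pos.ne'
    · exact h.isUnit
  have hSdet : IsUnit S.det := hS.det_pos.ne'.isUnit
  obtain ⟨A, hAdef⟩ : ∃ A, A = Qᴴ * S⁻¹ * Q := ⟨_, rfl⟩
  have hApd : A.PosDef := hAdef ▸ auxConj hS.inv hQdet
  have htrA : A.trace = (S⁻¹ * S0).trace := by
    rw [hAdef, Matrix.trace_mul_cycle, hQh, hQ2, Matrix.trace_mul_comm]
  have hdetA : A.det = S0.det * (S.det)⁻¹ := by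
    rw [hAdef, Matrix.det_mul, Matrix.det_mul, Matrix.det_conjTranspose, Matrix.det_nonsing_inv,
      Ring.inverse_eq_inv', star_trivial]
    have h2 : Q.det * Q.det = S0.det := by rw [← Matrix.det_mul, hQ2]
    rw [mul_comm _ Q.det, ← mul_assoc, h2]
  have hlogA : Real.log A.det = Real.log S0.det - Real.log S.det := by
    rw [hdetA, Real.log_mul hS0.det_pos.ne' (inv_ne_zero hS.det_pos.ne'), Real.log_inv]
    ring
  obtain ⟨hle, hiff⟩ := auxKey hApd
  refine ⟨by rw [hlogA] at hle; linarith, ?_, ?_⟩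
  · intro heq
    have hA1 : A = 1 := hiff.mp (by rw [hlogA, htrA]; linarith)
    have e : S0 * S⁻¹ = 1 := by
      have h := congrArg (fun M => Q * M * Q⁻¹) hA1
      simp only [hAdef, hQh] at h
      calc S0 * S⁻¹ = Q * (Q * S⁻¹ * Q) * Q⁻¹ := by
            rw [← hQ2]
            simp [Matrix.mul_assoc, Matrix.mul_nonsing_inv _ hQdet]
        _ = Q * 1 * Q⁻¹ := h
        _ = 1 := by rw [Matrix.mul_one, Matrix.mul_nonsing_inv _ hQdet]
    calc S = 1 * S := (Matrix.one_mul S).symm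
      _ = S0 * S⁻¹ * S := by rw [e]
      _ = S0 := by rw [Matrix.mul_assoc, Matrix.nonsing_inv_mul _ hSdet, Matrix.mul_one]
  · rintro rfl
    have hA1 : A = 1 := by
      rw [hAdef, hQh, ← hQ2, Matrix.mul_inv_rev, Matrix.mul_assoc, Matrix.mul_assoc,
        Matrix.nonsing_inv_mul _ hQdet, Matrix.mul_one, Matrix.mul_nonsing_inv _ hQdet]
    have := hiff.mpr hA1
    rw [htrA, hlogA] at this
    linarith

open Matrix MeasureTheory in
theorem stmt_13 {Ω : Type*} [MeasurableSpace Ω] (P : Measure Ω) [IsProbabilityMeasure P]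
    {r : ℕ} (z : Ω → Fin r → ℝ)
    (hz1 : ∀ i, Integrable (fun ω => z ω i) P)
    (hz2 : ∀ i j, Integrable (fun ω => z ω i * z ω j) P)
    (μ0 : Fin r → ℝ) (hμ0 : ∀ i, (∫ ω, z ω i ∂P) = μ0 i)
    (S0 : Matrix (Fin r) (Fin r) ℝ)
    (hS0 : ∀ i j, (∫ ω, (z ω i - μ0 i) * (z ω j - μ0 j) ∂P) = S0 i j)
    (hS0pd : S0.PosDef)
    (l : (Fin r → ℝ) → Matrix (Fin r) (Fin r) ℝ → ℝ)
    (hl : ∀ μ S, l μ S = Real.log S.det + ∫ ω, (z ω - μ) ⬝ᵥ S⁻¹.mulVec (z ω - μ) ∂P) :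
    l μ0 S0 = Real.log S0.det + r ∧
    ∀ (μ : Fin r → ℝ) (S : Matrix (Fin r) (Fin r) ℝ), S.PosDef →
      l μ0 S0 ≤ l μ S ∧ (l μ S = l μ0 S0 ↔ μ = μ0 ∧ S = S0) := by
  have hint : ∀ (c : Fin r → ℝ) (i j : Fin r),
      Integrable (fun ω => (z ω i - c i) * (z ω j - c j)) P := by
    intro c i j
    have h : (fun ω => (z ω i - c i) * (z ω j - c j)) =
        fun ω => z ω i * z ω j - c j * z ω i - c i * z ω j + c i * c j := by
      funext ω; ring
    rw [h]
    exact (((hz2 i j).sub ((hz1 i).const_mul _)).sub ((hz1 j).const_mul _)).add (integrable_const _)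
  have hzc : ∀ i, ∫ ω, (z ω i - μ0 i) ∂P = 0 := by
    intro i
    rw [integral_sub (hz1 i) (integrable_const _), hμ0, integral_const]
    simp
  have hmom : ∀ (μ : Fin r → ℝ) (i j : Fin r),
      ∫ ω, (z ω i - μ i) * (z ω j - μ j) ∂P = S0 i j + (μ0 i - μ i) * (μ0 j - μ j) := by
    intro μ i j
    have h : (fun ω => (z ω i - μ i) * (z ω j - μ j)) =
        fun ω => (z ω i - μ0 i) * (z ω j - μ0 j) + (μ0 j - μ j) * (z ω i - μ0 i)
          + (μ0 i - μ i) * (z ω j - μ0 j) + (μ0 i - μ i) * (μ0 j - μ j) := by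
      funext ω; ring
    have hi0 : Integrable (fun ω => (z ω i - μ0 i) * (z ω j - μ0 j)) P := hint μ0 i j
    have hi1 : Integrable (fun ω => (μ0 j - μ j) * (z ω i - μ0 i)) P :=
      ((hz1 i).sub (integrable_const _)).const_mul _
    have hi2 : Integrable (fun ω => (μ0 i - μ i) * (z ω j - μ0 j)) P :=
      ((hz1 j).sub (integrable_const _)).const_mul _
    have h01 : Integrable (fun ω => (z ω i - μ0 i) * (z ω j - μ0 j)
        + (μ0 j - μ j) * (z ω i - μ0 i)) P := hi0.add hi1
    have h012 : Integrable (fun ω => (z ω i - μ0 i) * (z ω j - μ0 j)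
        + (μ0 j - μ j) * (z ω i - μ0 i) + (μ0 i - μ i) * (z ω j - μ0 j)) P := h01.add hi2
    rw [h, integral_add h012 (integrable_const _),
      integral_add h01 hi2, integral_add hi0 hi1,
      hS0 i j, integral_const_mul, integral_const_mul, hzc i, hzc j, integral_const]
    simp
  have hs : ∀ i j, S0 i j = S0 j i := by
    intro i j
    conv_lhs => rw [← hS0pd.1]
    simp [Matrix.conjTranspose_apply]
  have hquad : ∀ (μ : Fin r → ℝ) (M : Matrix (Fin r) (Fin r) ℝ),
      ∫ ω, (z ω - μ) ⬝ᵥ M *ᵥ (z ω - μ) ∂P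
        = (M * S0).trace + (μ0 - μ) ⬝ᵥ M *ᵥ (μ0 - μ) := by
    intro μ M
    have hrw : ∀ ω, (z ω - μ) ⬝ᵥ M *ᵥ (z ω - μ)
        = ∑ i, ∑ j, M i j * ((z ω i - μ i) * (z ω j - μ j)) := by
      intro ω
      simp only [dotProduct, Matrix.mulVec, Pi.sub_apply, Finset.mul_sum]
      exact Finset.sum_congr rfl fun i _ => Finset.sum_congr rfl fun j _ => by ring
    calc ∫ ω, (z ω - μ) ⬝ᵥ M *ᵥ (z ω - μ) ∂P
        = ∫ ω, ∑ i, ∑ j, M i j * ((z ω i - μ i) * (z ω j - μ j)) ∂P := by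
          exact integral_congr_ae (Filter.Eventually.of_forall hrw)
      _ = ∑ i, ∑ j, M i j * (S0 i j + (μ0 i - μ i) * (μ0 j - μ j)) := by
          rw [integral_finset_sum (f := fun i ω => ∑ j, M i j * ((z ω i - μ i) * (z ω j - μ j))) _
            (fun i _ => integrable_finset_sum _ fun j _ => (hint μ i j).const_mul _)]
          refine Finset.sum_congr rfl fun i _ => ?_
          rw [integral_finset_sum _ fun j _ => (hint μ i j).const_mul _]
          refine Finset.sum_congr rfl fun j _ => ?_
          rw [integral_const_mul, hmom μ i j]
      _ = (M * S0).trace + (μ0 - μ) ⬝ᵥ M *ᵥ (μ0 - μ) := by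
          have h1 : ∀ i j, M i j * (S0 i j + (μ0 i - μ i) * (μ0 j - μ j))
              = M i j * S0 j i + (μ0 i - μ i) * (M i j * (μ0 j - μ j)) := fun i j => by
            rw [hs i j]; ring
          have h2 : (M * S0).trace = ∑ i, ∑ j, M i j * S0 j i := by
            simp [Matrix.trace, Matrix.mul_apply]
          have h3 : (μ0 - μ) ⬝ᵥ M *ᵥ (μ0 - μ)
              = ∑ i, (μ0 i - μ i) * ∑ j, M i j * (μ0 j - μ j) := by
            simp [dotProduct, Matrix.mulVec, Pi.sub_apply]
          simp_rw [h1, Finset.sum_add_distrib, ← Finset.mul_sum]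
          rw [h2, h3]
  have hl0 : l μ0 S0 = Real.log S0.det + r := by
    rw [hl, hquad μ0 S0⁻¹, Matrix.nonsing_inv_mul _ hS0pd.det_pos.ne'.isUnit]
    simp [Matrix.trace_one]
  refine ⟨hl0, fun μ S hSpd => ?_⟩
  have hq1 : 0 ≤ (μ0 - μ) ⬝ᵥ S⁻¹ *ᵥ (μ0 - μ) := by
    rcases eq_or_ne μ μ0 with rfl | hne
    · simp
    · have h0 : μ0 - μ ≠ 0 := sub_ne_zero.mpr (Ne.symm hne)
      have := hSpd.inv.dotProduct_mulVec_pos h0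
      rw [star_trivial] at this
      linarith
  have hq2 : (μ0 - μ) ⬝ᵥ S⁻¹ *ᵥ (μ0 - μ) = 0 → μ = μ0 := by
    intro h
    by_contra hne
    have h0 : μ0 - μ ≠ 0 := sub_ne_zero.mpr (Ne.symm hne)
    have := hSpd.inv.dotProduct_mulVec_pos h0
    rw [star_trivial] at this
    linarith
  have hlS : l μ S = Real.log S.det + (S⁻¹ * S0).trace + (μ0 - μ) ⬝ᵥ S⁻¹ *ᵥ (μ0 - μ) := by
    rw [hl, hquad μ S⁻¹]; ring
  obtain ⟨hle, hiff⟩ := auxMat hS0pd hSpd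
  refine ⟨by rw [hl0, hlS]; linarith, ?_, ?_⟩
  · intro heq
    rw [hl0, hlS] at heq
    have hq0 : (μ0 - μ) ⬝ᵥ S⁻¹ *ᵥ (μ0 - μ) = 0 := by linarith
    exact ⟨hq2 hq0, hiff.mp (by linarith)⟩
  · rintro ⟨rfl, rfl⟩
    rfl
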